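/- Let I be a finite index set and C a finite set; for each i ∈ I let S_i ⊆ C. Let k ≥ 1 be an integer and let p_i ∈ [0,1] for i ∈ I. On a probability space, let (X_i)_{i∈I} be independent random variables taking values in {0,1} with P(X_i = 1) = p_i, and write U = ⋃_{i : X_i = 1} S_i. Fix an element e ∈ C with ∑_{i : e ∈ S_i} p_i ≤ 1/6, let Z_e = ∑_{i : e ∈ S_i} X_i, let K be the event {|U| ≤ k − 1} and L the event {Z_e ≥ 1}. If P(K ∩ L) > 0, then the conditional expectation satisfies E[Z_e | K ∩ L] ≤ 6/5. -/

import Mathlib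

open MeasureTheory ProbabilityTheory

lemma biUnion_subtype {I : Type*} {C : Type*} [DecidableEq I] [DecidableEq C] (s : Finset I)
    (g : I → Finset C) :
    s.biUnion g = Finset.univ.biUnion (fun j : {x // x ∈ s} => g j) := by
  ext c; simp [Finset.mem_biUnion]

lemma prod_one_sub_ge {I : Type*} (s : Finset I) (p : I → ℝ) (h : ∀ j, 0 ≤ p j ∧ p j ≤ 1) :
    1 - ∑ j ∈ s, p j ≤ ∏ j ∈ s, (1 - p j) := by
  classical
  induction s using Finset.induction_on with
  | empty => simp
  | insert _ _ hni ih =>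
    rename_i a s
    rw [Finset.sum_insert hni, Finset.prod_insert hni]
    have h1 := (h a).1; have h2 := (h a).2
    have hsum : 0 ≤ ∑ j ∈ s, p j := Finset.sum_nonneg fun j _ => (h j).1
    have hple : ∏ j ∈ s, (1 - p j) ≤ 1 :=
      Finset.prod_le_one (fun j _ => by linarith [(h j).2]) (fun j _ => by linarith [(h j).1])
    nlinarith [ih]

/-- Independent `{0,1}` random variables `X i` select sets `S i ⊆ C`; `U` is the random
covered set. For a fixed element `e` with `∑_{i : e ∈ S i} p i ≤ 1/6`, conditioned on
the event that at most `k - 1` elements are covered and `e` is covered, the expected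
number of selected sets containing `e` is at most `6/5`. -/
theorem stmt1 {Ω : Type*} [MeasurableSpace Ω] (μ : Measure Ω) [IsProbabilityMeasure μ]
    {I : Type*} [Fintype I] {C : Type*} [Fintype C] [DecidableEq C]
    (S : I → Finset C) (k : ℕ) (hk : 1 ≤ k)
    (p : I → ℝ) (hp01 : ∀ i, p i ∈ Set.Icc (0 : ℝ) 1)
    (X : I → Ω → ℕ) (hmeas : ∀ i, Measurable (X i))
    (h01 : ∀ i ω, X i ω = 0 ∨ X i ω = 1)
    (hind : iIndepFun X μ)
    (hp : ∀ i, (μ {ω | X i ω = 1}).toReal = p i)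
    (U : Ω → Finset C)
    (hU : ∀ ω, U ω = Finset.univ.biUnion fun i => if X i ω = 1 then S i else ∅)
    (e : C) (he : ∑ i ∈ Finset.univ.filter (fun i => e ∈ S i), p i ≤ 1 / 6)
    (Z : Ω → ℕ) (hZ : ∀ ω, Z ω = ∑ i ∈ Finset.univ.filter (fun i => e ∈ S i), X i ω)
    (K : Set Ω) (hK : K = {ω | (U ω).card ≤ k - 1})
    (L : Set Ω) (hL : L = {ω | 1 ≤ Z ω})
    (hpos : 0 < μ (K ∩ L)) :
    ∫ ω, (Z ω : ℝ) ∂(μ[|K ∩ L]) ≤ 6 / 5 := by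
  classical
  set F : Finset I := Finset.univ.filter (fun i => e ∈ S i) with hF
  -- the joint random variable
  set Φ : Ω → (I → ℕ) := fun ω i => X i ω with hΦdef
  have hΦ : Measurable Φ := measurable_pi_lambda _ hmeas
  have hAll : ∀ T : Set (I → ℕ), MeasurableSet (Φ ⁻¹' T) :=
    fun T => hΦ (Set.to_countable T).measurableSet
  -- events
  have hX1 : ∀ i, MeasurableSet {ω | X i ω = 1} := fun i =>
    hmeas i (measurableSet_singleton 1)
  have hX0 : ∀ i, MeasurableSet {ω | X i ω = 0} := fun i =>
    hmeas i (measurableSet_singleton 0)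
  set D : I → Set Ω := fun i =>
    Φ ⁻¹' {x | (S i ∪ (Finset.univ.erase i).biUnion
      (fun j => if x j = 1 then S j else ∅)).card ≤ k - 1} with hD
  set E : I → Set Ω := fun i =>
    Φ ⁻¹' {x | (S i ∪ Fᶜ.biUnion (fun j => if x j = 1 then S j else ∅)).card ≤ k - 1} with hE
  set B : I → Set Ω := fun i =>
    ({ω | X i ω = 1} ∩ ⋂ j ∈ F.erase i, {ω | X j ω = 0}) ∩ E i with hB
  have hKset : K = Φ ⁻¹' {x | (Finset.univ.biUnion
      (fun i => if x i = 1 then S i else ∅)).card ≤ k - 1} := by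
    rw [hK]; ext ω; simp [hU ω, hΦdef]
  have hKmeas : MeasurableSet K := hKset ▸ hAll _
  have hLmeas : MeasurableSet L := by
    rw [hL]
    have : {ω | 1 ≤ Z ω} = Φ ⁻¹' {x | 1 ≤ ∑ i ∈ F, x i} := by
      ext ω; simp [hZ ω, hΦdef]
    rw [this]; exact hAll _
  have hKL : MeasurableSet (K ∩ L) := hKmeas.inter hLmeas
  -- step: {X i = 1} ∩ K = {X i = 1} ∩ D i for i ∈ F
  have hXK : ∀ i ∈ F, {ω | X i ω = 1} ∩ K = {ω | X i ω = 1} ∩ D i := by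
    intro i hi
    ext ω
    simp only [Set.mem_inter_iff, Set.mem_setOf_eq, hD, Set.mem_preimage, hKset]
    refine and_congr_right fun h1 => ?_
    have huniv : (Finset.univ.biUnion fun j => if Φ ω j = 1 then S j else ∅)
        = S i ∪ (Finset.univ.erase i).biUnion fun j => if Φ ω j = 1 then S j else ∅ := by
      conv_lhs => rw [← Finset.insert_erase (Finset.mem_univ i)]
      rw [Finset.biUnion_insert, if_pos h1]
    rw [huniv]
  -- independence: μ ({X i = 1} ∩ D i) = μ {X i = 1} * μ (D i)
  have hindD : ∀ i, μ ({ω | X i ω = 1} ∩ D i) = μ {ω | X i ω = 1} * μ (D i) := by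
    intro i
    have hdis : Disjoint ({i} : Finset I) (Finset.univ.erase i) := by simp
    have hIF := hind.indepFun_finset {i} (Finset.univ.erase i) hdis hmeas
    set s1 : Set (({i} : Finset I) → ℕ) := {y | y ⟨i, Finset.mem_singleton_self i⟩ = 1} with hs1
    set t1 : Set ({x // x ∈ Finset.univ.erase i} → ℕ) :=
      {y | (S i ∪ Finset.univ.biUnion (fun j : {x // x ∈ Finset.univ.erase i} =>
        if y j = 1 then S (j : I) else ∅)).card ≤ k - 1} with ht1
    have h1 : {ω | X i ω = 1} = (fun a (j : {x // x ∈ ({i} : Finset I)}) => X (j : I) a) ⁻¹' s1 := rfl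
    have h2 : D i = (fun a (j : {x // x ∈ Finset.univ.erase i}) => X (j : I) a) ⁻¹' t1 := by
      ext ω
      simp only [hD, Set.mem_preimage, Set.mem_setOf_eq, ht1]
      rw [biUnion_subtype (Finset.univ.erase i) (fun j => if X j ω = 1 then S j else ∅)]
    rw [h1, h2]
    exact hIF.measure_inter_preimage_eq_mul s1 t1
      (Set.to_countable s1).measurableSet (Set.to_countable t1).measurableSet
  -- D i ⊆ E i
  have hDE : ∀ i ∈ F, D i ⊆ E i := by
    intro i hi ω hω
    simp only [hD, hE, Set.mem_preimage, Set.mem_setOf_eq] at hω ⊢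
    refine le_trans (Finset.card_le_card (Finset.union_subset_union le_rfl
      (Finset.biUnion_subset_biUnion_of_subset_left _ ?_))) hω
    intro j hj
    simp only [Finset.mem_compl] at hj
    simp only [Finset.mem_erase, Finset.mem_univ, and_true]
    exact fun h => hj (h ▸ hi)
  -- B i ⊆ K ∩ L
  have hBKL : ∀ i ∈ F, B i ⊆ K ∩ L := by
    intro i hi ω hω
    obtain ⟨⟨h1, h0⟩, hEi⟩ := hω
    simp only [Set.mem_iInter, Set.mem_setOf_eq] at h0 h1
    constructor
    · -- ω ∈ K
      rw [hKset]
      simp only [Set.mem_preimage, Set.mem_setOf_eq]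
      simp only [hE, Set.mem_preimage, Set.mem_setOf_eq] at hEi
      refine le_trans (Finset.card_le_card ?_) hEi
      intro c hc
      rw [Finset.mem_biUnion] at hc
      obtain ⟨j, -, hcj⟩ := hc
      by_cases hjF : j ∈ F
      · by_cases hji : j = i
        · subst hji
          rw [if_pos h1] at hcj
          exact Finset.mem_union_left _ hcj
        · have hz : Φ ω j = 0 := h0 j (Finset.mem_erase.2 ⟨hji, hjF⟩)
          rw [hz] at hcj
          simp at hcj
      · refine Finset.mem_union_right _ (Finset.mem_biUnion.2 ⟨j, Finset.mem_compl.2 hjF, hcj⟩)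
    · -- ω ∈ L
      rw [hL]
      simp only [Set.mem_setOf_eq, hZ ω]
      calc 1 = X i ω := h1.symm
      _ ≤ ∑ j ∈ F, X j ω := Finset.single_le_sum (f := fun j => X j ω) (fun j _ => Nat.zero_le _) hi
  have hBdisj : (↑F : Set I).PairwiseDisjoint B := by
    intro i hi j hj hij
    simp only [Function.onFun]
    rw [Set.disjoint_left]
    intro ω hωi hωj
    obtain ⟨⟨-, h0⟩, -⟩ := hωi
    obtain ⟨⟨h1, -⟩, -⟩ := hωj
    simp only [Set.mem_iInter, Set.mem_setOf_eq] at h0 h1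
    have := h0 j (Finset.mem_erase.2 ⟨fun h => hij (h ▸ rfl), hj⟩)
    rw [this] at h1
    exact one_ne_zero h1.symm
  -- B pairwise disjoint
  -- measure of B i
  have hBmeasure : ∀ i ∈ F, μ (B i) =
      μ {ω | X i ω = 1} * ((∏ j ∈ F.erase i, μ {ω | X j ω = 0}) * μ (E i)) := by
    intro i hi
    set G : Set Ω := {ω | X i ω = 1} ∩ ⋂ j ∈ F.erase i, {ω | X j ω = 0} with hG
    have hGprod : μ G = μ {ω | X i ω = 1} * ∏ j ∈ F.erase i, μ {ω | X j ω = 0} := by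
      have hGiInter : G = ⋂ j ∈ F, {ω | X j ω = if j = i then 1 else 0} := by
        ext ω
        simp only [hG, Set.mem_inter_iff, Set.mem_iInter, Set.mem_setOf_eq, Finset.mem_erase]
        constructor
        · rintro ⟨h1, h0⟩ j hj
          by_cases hji : j = i
          · subst hji; rw [if_pos rfl]; exact h1
          · rw [if_neg hji]; exact h0 j ⟨hji, hj⟩
        · intro h
          exact ⟨by simpa using h i hi, fun j hj => by simpa [hj.1] using h j hj.2⟩
      rw [hGiInter,
        hind.meas_biInter (S := F) (s := fun j => {ω | X j ω = if j = i then 1 else 0})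
          (fun j _ => ⟨{if j = i then 1 else 0}, measurableSet_singleton _, rfl⟩),
        ← Finset.mul_prod_erase F _ hi]
      congr 1
      · simp
      · refine Finset.prod_congr rfl fun j hj => ?_
        rw [if_neg (Finset.mem_erase.1 hj).1]
    have hdis : Disjoint F Fᶜ := disjoint_compl_right
    have hIF := hind.indepFun_finset F Fᶜ hdis hmeas
    set sG : Set ({x // x ∈ F} → ℕ) :=
      {y | ∀ j : {x // x ∈ F}, y j = if (j : I) = i then 1 else 0} with hsG
    set tE : Set ({x // x ∈ Fᶜ} → ℕ) := {y | (S i ∪ Finset.univ.biUnion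
      (fun j : {x // x ∈ Fᶜ} => if y j = 1 then S (j : I) else ∅)).card ≤ k - 1} with htE
    have hGpre : G = (fun a (j : {x // x ∈ F}) => X (j : I) a) ⁻¹' sG := by
      ext ω
      simp only [hG, Set.mem_inter_iff, Set.mem_iInter, Set.mem_setOf_eq, Set.mem_preimage,
        Finset.mem_erase, hsG, Subtype.forall]
      constructor
      · rintro ⟨h1, h0⟩ j hj
        by_cases hji : j = i
        · subst hji; simpa using h1
        · rw [if_neg hji]; exact h0 j ⟨hji, hj⟩
      · intro h
        exact ⟨by simpa using h i hi, fun j hj => by simpa [hj.1] using h j hj.2⟩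
    have hEpre : E i = (fun a (j : {x // x ∈ Fᶜ}) => X (j : I) a) ⁻¹' tE := by
      ext ω
      simp only [hE, Set.mem_preimage, Set.mem_setOf_eq, htE]
      rw [biUnion_subtype Fᶜ (fun j => if X j ω = 1 then S j else ∅)]
    have hBi : B i = G ∩ E i := rfl
    calc μ (B i) = μ (G ∩ E i) := by rw [hBi]
    _ = μ G * μ (E i) := by
        rw [hGpre, hEpre]
        exact hIF.measure_inter_preimage_eq_mul sG tE
          (Set.to_countable sG).measurableSet (Set.to_countable tE).measurableSet
    _ = _ := by rw [hGprod, mul_assoc]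
  -- μ {X j = 0} as real
  have hq0 : ∀ j, (μ {ω | X j ω = 0}).toReal = 1 - p j := by
    intro j
    have hcomp : {ω | X j ω = 0} = {ω | X j ω = 1}ᶜ := by
      ext ω; rcases h01 j ω with h | h <;> simp [h]
    rw [hcomp, measure_compl (hX1 j) (measure_ne_top μ _), measure_univ,
      ENNReal.toReal_sub_of_le prob_le_one ENNReal.one_ne_top, ENNReal.toReal_one, hp j]
  -- measurability of B
  have hBmeas : ∀ i, MeasurableSet (B i) := by
    intro i
    exact (((hX1 i).inter (MeasurableSet.biInter (Set.to_countable _)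
      (fun j _ => hX0 j))).inter (hAll _))
  -- notation
  set m : ℝ := (μ (K ∩ L)).toReal with hm
  have hmpos : 0 < m := ENNReal.toReal_pos hpos.ne' (measure_ne_top μ _)
  -- lower bound on m
  have hlow : (5 / 6 : ℝ) * ∑ i ∈ F, p i * (μ (D i)).toReal ≤ m := by
    have h1 : ∑ i ∈ F, μ (B i) ≤ μ (K ∩ L) := by
      rw [← measure_biUnion_finset hBdisj (fun b _ => hBmeas b)]
      exact measure_mono (Set.iUnion₂_subset hBKL)
    have h2 : ∑ i ∈ F, (μ (B i)).toReal ≤ m := by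
      rw [hm, ← ENNReal.toReal_sum (fun i _ => measure_ne_top μ _)]
      exact ENNReal.toReal_mono (measure_ne_top μ _) h1
    have key : ∀ i ∈ F, (5 / 6 : ℝ) * (p i * (μ (D i)).toReal) ≤ (μ (B i)).toReal := by
      intro i hi
      rw [hBmeasure i hi, ENNReal.toReal_mul, ENNReal.toReal_mul, hp i, ENNReal.toReal_prod]
      have hq : (5 / 6 : ℝ) ≤ ∏ j ∈ F.erase i, (μ {ω | X j ω = 0}).toReal := by
        have hpe : ∏ j ∈ F.erase i, (μ {ω | X j ω = 0}).toReal
            = ∏ j ∈ F.erase i, (1 - p j) := Finset.prod_congr rfl fun j _ => hq0 j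
        rw [hpe]
        have hsub : ∑ j ∈ F.erase i, p j ≤ 1 / 6 :=
          le_trans (Finset.sum_le_sum_of_subset_of_nonneg (Finset.erase_subset i F)
            (fun j _ _ => (hp01 j).1)) he
        have := prod_one_sub_ge (F.erase i) p (fun j => ⟨(hp01 j).1, (hp01 j).2⟩)
        linarith
      have hde : (μ (D i)).toReal ≤ (μ (E i)).toReal :=
        ENNReal.toReal_mono (measure_ne_top μ _) (measure_mono (hDE i hi))
      have hpnn := (hp01 i).1
      have hdnn : (0 : ℝ) ≤ (μ (D i)).toReal := ENNReal.toReal_nonneg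
      have hqde := mul_le_mul hq hde hdnn (le_trans (by norm_num) hq)
      nlinarith
    calc (5 / 6 : ℝ) * ∑ i ∈ F, p i * (μ (D i)).toReal
        = ∑ i ∈ F, (5 / 6 : ℝ) * (p i * (μ (D i)).toReal) := by rw [Finset.mul_sum]
    _ ≤ ∑ i ∈ F, (μ (B i)).toReal := Finset.sum_le_sum key
    _ ≤ m := h2
  -- integral computation
  have hint : ∫ ω in K ∩ L, (Z ω : ℝ) ∂μ = ∑ i ∈ F, p i * (μ (D i)).toReal := by
    have hXind : ∀ i, (fun ω => (X i ω : ℝ)) =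
        Set.indicator {ω | X i ω = 1} (fun _ => (1 : ℝ)) := by
      intro i; funext ω
      rcases h01 i ω with h | h <;> simp [Set.indicator_apply, h]
    have hZfun : ∀ ω, (Z ω : ℝ) = ∑ i ∈ F, (X i ω : ℝ) := by
      intro ω; rw [hZ ω]; push_cast; ring
    calc ∫ ω in K ∩ L, (Z ω : ℝ) ∂μ = ∑ i ∈ F, ∫ ω in K ∩ L, (X i ω : ℝ) ∂μ := by
          simp_rw [hZfun]
          refine integral_finset_sum F fun i _ => ?_
          rw [hXind i]
          exact (integrable_indicator_iff (hX1 i)).2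
            (integrableOn_const (measure_ne_top _ _))
    _ = ∑ i ∈ F, p i * (μ (D i)).toReal := by
        refine Finset.sum_congr rfl fun i hi => ?_
        rw [hXind i, integral_indicator (hX1 i), setIntegral_const, smul_eq_mul, mul_one,
          measureReal_restrict_apply (hX1 i), measureReal_def]
        have hstep : {ω | X i ω = 1} ∩ (K ∩ L) = {ω | X i ω = 1} ∩ K := by
          ext ω
          simp only [Set.mem_inter_iff, Set.mem_setOf_eq]
          constructor
          · rintro ⟨h1, h2, -⟩; exact ⟨h1, h2⟩
          · rintro ⟨h1, h2⟩
            refine ⟨h1, h2, ?_⟩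
            rw [hL]; simp only [Set.mem_setOf_eq, hZ ω]
            calc 1 = X i ω := h1.symm
            _ ≤ ∑ j ∈ F, X j ω := Finset.single_le_sum (f := fun j => X j ω)
                (fun j _ => Nat.zero_le _) hi
        rw [hstep, hXK i hi, hindD i, ENNReal.toReal_mul, hp i]
  -- final assembly
  have hfin : ∫ ω, (Z ω : ℝ) ∂(μ[|K ∩ L]) = m⁻¹ * ∫ ω in K ∩ L, (Z ω : ℝ) ∂μ := by
    rw [ProbabilityTheory.cond, integral_smul_measure, ENNReal.toReal_inv, smul_eq_mul, hm]
  rw [hfin, hint]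
  rw [inv_mul_le_iff₀ hmpos]
  nlinarith [hlow]
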